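/- Let 𝓐 ⊆ [0, 2π) be a finite set of A distinct phase values, let m ≥ 1, K ≥ 1, B ≥ 1 be integers, and let β > 0. For every finite constellation 𝓑 ⊆ ℂ with |𝓑| = B, the set 𝓒(𝓑) satisfies |𝓒(𝓑)| ≤ B^m · A^K = |𝓒(𝓑_ASK)|; that is, among all B-point constellations, the ASK constellation 𝓑_ASK = {β, 3β, …, (2B−1)β} maximizes the cardinality of 𝓒. -/

import Mathlib

open Complex Real

/-- The set `𝓒(𝓑)` of all distinct `K × m` complex matrices of the form
`C = (e^{iθ_1}, …, e^{iθ_K})ᵀ x` with `x ∈ 𝓑^m` and `θ ∈ 𝓐^K`. -/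
def matConfigSet (m K : ℕ) (A : Finset ℝ) (B : Finset ℂ) :
    Set (Matrix (Fin K) (Fin m) ℂ) :=
  {C | ∃ x : Fin m → ℂ, ∃ θ : Fin K → ℝ, (∀ i, x i ∈ B) ∧ (∀ k, θ k ∈ A) ∧
    C = fun k i => Complex.exp (Complex.I * (θ k : ℂ)) * x i}


noncomputable def cfgAux (m K : ℕ) (p : (Fin m → ℂ) × (Fin K → ℝ)) :
    Matrix (Fin K) (Fin m) ℂ := fun k i => Complex.exp (Complex.I * (p.2 k : ℂ)) * p.1 i

lemma matConfigSet_eq_image (m K : ℕ) (A : Finset ℝ) (B : Finset ℂ) :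
    matConfigSet m K A B =
      ↑((((Fintype.piFinset fun _ : Fin m => B) ×ˢ (Fintype.piFinset fun _ : Fin K => A)).image
        (cfgAux m K))) := by
  ext C
  simp only [matConfigSet, Set.mem_setOf_eq, Finset.coe_image, Set.mem_image,
    Finset.mem_coe, Finset.mem_product, Fintype.mem_piFinset, cfgAux]
  constructor
  · rintro ⟨x, θ, hx, hθ, rfl⟩
    exact ⟨(x, θ), ⟨hx, hθ⟩, rfl⟩
  · rintro ⟨⟨x, θ⟩, ⟨hx, hθ⟩, rfl⟩
    exact ⟨x, θ, hx, hθ, rfl⟩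

lemma abs_exp_I_mul (θ : ℝ) : ‖Complex.exp (Complex.I * (θ : ℂ))‖ = 1 := by
  rw [Complex.norm_exp]; simp

lemma theta_inj {a b : ℝ} (ha0 : 0 ≤ a) (ha2 : a < 2*Real.pi) (hb0 : 0 ≤ b)
    (hb2 : b < 2*Real.pi)
    (h : Complex.exp (Complex.I * a) = Complex.exp (Complex.I * b)) : a = b := by
  rw [Complex.exp_eq_exp_iff_exists_int] at h
  obtain ⟨n, hn⟩ := h
  have him := congrArg Complex.im hn
  simp [Complex.add_im, Complex.mul_im, Complex.mul_re] at him
  have hpi := Real.pi_pos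
  have hn0 : n = 0 := by
    have h1 : (n : ℝ) < 1 := by nlinarith
    have h2 : (-1 : ℝ) < n := by nlinarith
    have := (by exact_mod_cast h1 : n < 1)
    have := (by exact_mod_cast h2 : (-1 : ℤ) < n)
    omega
  subst hn0
  simpa using him

/-- For any `B`-point constellation `𝓑 ⊆ ℂ` and finite phase set
`𝓐 ⊆ [0, 2π)`, `|𝓒(𝓑)| ≤ B^m · A^K = |𝓒(𝓑_ASK)|`: the ASK constellation
`𝓑_ASK = {β, 3β, …, (2B−1)β}` maximizes the cardinality of `𝓒`. -/
theorem stmt_2 (A : Finset ℝ) (hA : ∀ a ∈ A, 0 ≤ a ∧ a < 2 * Real.pi)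
    (m K B : ℕ) (hm : 1 ≤ m) (hK : 1 ≤ K) (hB : 1 ≤ B) (β : ℝ) (hβ : 0 < β)
    (Bc : Finset ℂ) (hBc : Bc.card = B) :
    (matConfigSet m K A Bc).ncard ≤ B ^ m * A.card ^ K ∧
    B ^ m * A.card ^ K
      = (matConfigSet m K A
          ((Finset.Icc 1 B).image (fun b : ℕ => ((2 * (b : ℝ) - 1) * β : ℂ)))).ncard := by
  set ASK : Finset ℂ := (Finset.Icc 1 B).image (fun b : ℕ => ((2 * (b : ℝ) - 1) * β : ℂ))
    with hASK
  have hASKpos : ∀ c ∈ ASK, ∃ r : ℝ, 0 < r ∧ c = (r : ℂ) := by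
    intro c hc
    simp only [hASK, Finset.mem_image, Finset.mem_Icc] at hc
    obtain ⟨b, ⟨hb1, _⟩, rfl⟩ := hc
    refine ⟨(2 * (b : ℝ) - 1) * β, ?_, by push_cast; ring⟩
    have : (1 : ℝ) ≤ (b : ℝ) := by exact_mod_cast hb1
    nlinarith
  have hASKcard : ASK.card = B := by
    rw [hASK, Finset.card_image_of_injOn, Nat.card_Icc]
    · omega
    · intro x hx y hy hxy
      have h1 : (2 * (x : ℝ) - 1) * β = (2 * (y : ℝ) - 1) * β := Complex.ofReal_inj.mp (by simpa using hxy)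
      have h2 := mul_right_cancel₀ hβ.ne' h1
      have : (x : ℝ) = (y : ℝ) := by linarith
      exact_mod_cast this
  have prodcard : ∀ Bf : Finset ℂ,
      (((Fintype.piFinset fun _ : Fin m => Bf) ×ˢ
        (Fintype.piFinset fun _ : Fin K => A))).card = Bf.card ^ m * A.card ^ K := by
    intro Bf
    simp [Finset.card_product, Fintype.card_piFinset]
  constructor
  · rw [matConfigSet_eq_image, Set.ncard_coe_finset]
    calc _ ≤ _ := Finset.card_image_le
      _ = B ^ m * A.card ^ K := by rw [prodcard, hBc]
  · rw [matConfigSet_eq_image, Set.ncard_coe_finset,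
      Finset.card_image_of_injOn, prodcard, hASKcard]
    intro p hp q hq h
    simp only [Finset.coe_product, Set.mem_prod, Finset.mem_coe,
      Fintype.mem_piFinset] at hp hq
    have hx : p.1 = q.1 := by
      funext i
      obtain ⟨r, hr, hrp⟩ := hASKpos _ (hp.1 i)
      obtain ⟨s, hs, hsq⟩ := hASKpos _ (hq.1 i)
      have he := congrFun (congrFun h ⟨0, hK⟩) i
      simp only [cfgAux] at he
      have habs := congrArg (‖·‖) he
      rw [norm_mul, norm_mul, abs_exp_I_mul, abs_exp_I_mul, one_mul, one_mul,
        hrp, hsq, Complex.norm_real, Complex.norm_real, Real.norm_eq_abs, Real.norm_eq_abs,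
        abs_of_pos hr, abs_of_pos hs] at habs
      rw [hrp, hsq, habs]
    have hθ : p.2 = q.2 := by
      funext k
      have he := congrFun (congrFun h k) ⟨0, hm⟩
      simp only [cfgAux] at he
      obtain ⟨r, hr, hrp⟩ := hASKpos _ (hp.1 ⟨0, hm⟩)
      rw [hx] at hrp
      rw [hx, hrp] at he
      have hr0 : ((r : ℂ)) ≠ 0 := by exact_mod_cast hr.ne'
      have hexp := mul_right_cancel₀ hr0 he
      obtain ⟨h1, h2⟩ := hA _ (hp.2 k)
      obtain ⟨h3, h4⟩ := hA _ (hq.2 k)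
      exact theta_inj h1 h2 h3 h4 hexp
    exact Prod.ext hx hθ
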